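/- If X is an Exponential random variable with rate 1, then E[-ln X] = γ, the Euler–Mascheroni constant. -/

import Mathlib

open MeasureTheory ProbabilityTheory Real
open scoped NNReal ENNReal

lemma key_log_integral :
    ∫ t in Set.Ioi (0:ℝ), Real.log t * Real.exp (-t) = -Real.eulerMascheroniConstant := by
  set I : ℝ := ∫ t in Set.Ioi (0:ℝ), Real.log t * Real.exp (-t) with hI
  have h1 := Complex.hasDerivAt_GammaIntegral (s := 1) (by simp)
  have heq : (∫ t : ℝ in Set.Ioi 0, (t : ℂ) ^ ((1:ℂ) - 1) * (Real.log t * Real.exp (-t)))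
      = (I : ℂ) := by
    rw [hI]
    have : ∀ t ∈ Set.Ioi (0:ℝ), (t : ℂ) ^ ((1:ℂ) - 1) * (Real.log t * Real.exp (-t))
        = ((Real.log t * Real.exp (-t) : ℝ) : ℂ) := fun t ht => by
      simp [Complex.ofReal_mul]
    rw [setIntegral_congr_fun measurableSet_Ioi this]
    exact integral_ofReal
  rw [heq] at h1
  have h2 : Complex.Gamma =ᶠ[nhds (1:ℂ)] Complex.GammaIntegral := by
    filter_upwards [IsOpen.mem_nhds (isOpen_lt continuous_const Complex.continuous_re)
      (by norm_num : (0:ℝ) < (1:ℂ).re)] with s hs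
    exact Complex.Gamma_eq_integral hs
  have h3 : HasDerivAt Complex.Gamma (I : ℂ) 1 := h1.congr_of_eventuallyEq h2
  have h4 : HasDerivAt (fun x : ℝ => (Complex.Gamma x).re) (I : ℂ).re 1 := by
    exact_mod_cast h3.real_of_complex
  have h5 : HasDerivAt Real.Gamma I 1 := by
    exact h4
  have := h5.unique Real.hasDerivAt_Gamma_one
  linarith

theorem expectation_neg_log_exponential
    {Ω : Type*} [MeasurableSpace Ω] (μ : Measure Ω) [IsProbabilityMeasure μ]
    (X : Ω → ℝ) (hXm : Measurable X)
    (hX : Measure.map X μ = expMeasure 1) :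
    ∫ ω, -Real.log (X ω) ∂μ = Real.eulerMascheroniConstant := by
  have h0 : ∫ ω, -Real.log (X ω) ∂μ = ∫ x, -Real.log x ∂(Measure.map X μ) :=
    (integral_map hXm.aemeasurable measurable_log.neg.aestronglyMeasurable).symm
  rw [h0, hX]
  have hexp : expMeasure 1 =
      MeasureTheory.volume.withDensity (fun x => ENNReal.ofReal (exponentialPDFReal 1 x)) := rfl
  rw [hexp]
  have hφm : Measurable (fun x => Real.toNNReal (exponentialPDFReal 1 x)) :=
    (measurable_exponentialPDFReal 1).real_toNNReal
  have hcoe : (fun x => ENNReal.ofReal (exponentialPDFReal 1 x))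
      = fun x => ((Real.toNNReal (exponentialPDFReal 1 x) : ℝ≥0) : ℝ≥0∞) := rfl
  rw [hcoe, integral_withDensity_eq_integral_smul hφm]
  have : ∀ x : ℝ,
      (Real.toNNReal (exponentialPDFReal 1 x)) • (-Real.log x)
        = Set.indicator (Set.Ici 0) (fun t => Real.exp (-t) * (-Real.log t)) x := by
    intro x
    rw [NNReal.smul_def, smul_eq_mul, Real.coe_toNNReal _ (exponentialPDFReal_nonneg one_pos x)]
    simp only [exponentialPDFReal, gammaPDFReal]
    by_cases hx : 0 ≤ x <;> simp [hx, Set.indicator_of_mem, Set.indicator_of_notMem]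
  simp_rw [this]
  rw [integral_indicator measurableSet_Ici, integral_Ici_eq_integral_Ioi]
  have : ∫ t in Set.Ioi (0:ℝ), Real.exp (-t) * (-Real.log t)
      = -∫ t in Set.Ioi (0:ℝ), Real.log t * Real.exp (-t) := by
    rw [← integral_neg]
    exact setIntegral_congr_fun measurableSet_Ioi (fun t _ => by ring)
  rw [this, key_log_integral, neg_neg]
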